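/- Let m ≥ 3 be an odd integer. Then the coefficient of X^{φ(m)/2} in the m-th cyclotomic polynomial Φ_m(X) is an odd integer. -/
import Mathlib

open Polynomial

/-- The cyclotomic polynomial over `ℚ` is self-reciprocal for `m ≥ 2`. -/
lemma cyclotomic_reverse_eq_rat {m : ℕ} (hm : 2 ≤ m) :
    (cyclotomic m ℚ).reverse = cyclotomic m ℚ := by
  have hm0 : m ≠ 0 := by omega
  have hζ : IsPrimitiveRoot (Complex.exp (2 * Real.pi * Complex.I / m)) m :=
    Complex.isPrimitiveRoot_exp m hm0
  set ζ : ℂ := Complex.exp (2 * Real.pi * Complex.I / m)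
  have hζ0 : ζ ≠ 0 := hζ.ne_zero hm0
  have hζinv0 : ζ⁻¹ ≠ 0 := inv_ne_zero hζ0
  haveI : Invertible (ζ⁻¹ : ℂ) := invertibleOfNonzero hζinv0
  have hmin : cyclotomic m ℚ = minpoly ℚ ζ := cyclotomic_eq_minpoly_rat hζ (by omega)
  have hinvinv : (⅟(ζ⁻¹ : ℂ)) = ζ := by
    rw [invOf_eq_inv, inv_inv]
  have hroot : Polynomial.aeval ζ ((cyclotomic m ℚ).reverse) = 0 := by
    rw [aeval_def, ← hinvinv, eval₂_reverse_eq_zero_iff]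
    rw [← eval_map, map_cyclotomic]
    exact (hζ.inv).isRoot_cyclotomic (by omega)
  have hdvd : cyclotomic m ℚ ∣ (cyclotomic m ℚ).reverse := by
    have h := minpoly.dvd ℚ ζ hroot
    rwa [← hmin] at h
  have hc0 : (cyclotomic m ℚ).coeff 0 = 1 := cyclotomic_coeff_zero ℚ (by omega)
  have hne : cyclotomic m ℚ ≠ 0 := cyclotomic_ne_zero m ℚ
  have htd : (cyclotomic m ℚ).natTrailingDegree = 0 := by
    rw [natTrailingDegree_eq_zero]
    right; rw [hc0]; exact one_ne_zero
  have hmonic : ((cyclotomic m ℚ).reverse).Monic := by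
    unfold Polynomial.Monic
    rw [reverse_leadingCoeff, Polynomial.trailingCoeff, htd, hc0]
  exact eq_of_monic_of_dvd_of_natDegree_le (cyclotomic.monic m ℚ) hmonic hdvd
    (reverse_natDegree_le _)

/-- Palindromic coefficients of `cyclotomic m ℤ`. -/
lemma cyclotomic_coeff_palindrome {m i : ℕ} (hm : 2 ≤ m) (hi : i ≤ m.totient) :
    (Polynomial.cyclotomic m ℤ).coeff i = (Polynomial.cyclotomic m ℤ).coeff (m.totient - i) := by
  have hq : ((cyclotomic m ℤ).coeff i : ℚ) = ((cyclotomic m ℤ).coeff (m.totient - i) : ℚ) := by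
    have h1 : ∀ j : ℕ, ((cyclotomic m ℤ).coeff j : ℚ) = (cyclotomic m ℚ).coeff j := by
      intro j
      rw [← map_cyclotomic_int m ℚ, coeff_map]
      simp
    rw [h1, h1]
    conv_lhs => rw [← cyclotomic_reverse_eq_rat hm]
    rw [coeff_reverse, natDegree_cyclotomic, revAt_le hi]
  exact_mod_cast hq

lemma eval_one_cyclotomic_odd {m : ℕ} (hm : Odd m) (h3 : 3 ≤ m) :
    Odd (Polynomial.eval 1 (Polynomial.cyclotomic m ℤ)) := by
  by_cases h : ∃ p k : ℕ, p.Prime ∧ p ^ (k + 1) = m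
  · obtain ⟨p, k, hp, rfl⟩ := h
    haveI : Fact p.Prime := ⟨hp⟩
    rw [eval_one_cyclotomic_prime_pow]
    have hpodd : Odd p := by
      rcases hp.eq_two_or_odd' with h2 | hodd
      · subst h2
        exfalso
        have : (2 : ℕ) ∣ 2 ^ (k + 1) := dvd_pow_self 2 (Nat.succ_ne_zero k)
        rw [Nat.odd_iff] at hm
        omega
      · exact hodd
    exact_mod_cast hpodd
  · rw [eval_one_cyclotomic_not_prime_pow]
    · exact odd_one
    · intro p hp k hk
      rcases k with _ | k
      · simp at hk; omega
      · exact h ⟨p, k, hp, hk⟩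

/-- Let `m ≥ 3` be an odd integer. The coefficient of `X^(φ(m)/2)` in the `m`-th
cyclotomic polynomial is an odd integer. -/
theorem cyclotomic_middle_coeff_odd (m : ℕ) (hm : Odd m) (h3 : 3 ≤ m) :
    Odd ((Polynomial.cyclotomic m ℤ).coeff (m.totient / 2)) := by
  obtain ⟨k, hk⟩ : ∃ k, m.totient = 2 * k := (Nat.totient_even (by omega)).two_dvd
  have hk2 : m.totient / 2 = k := by omega
  rw [hk2]
  -- work in `ZMod 2`
  set b : ℕ → ZMod 2 := fun j => ((Polynomial.cyclotomic m ℤ).coeff j : ZMod 2) with hb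
  -- palindrome for b
  have hpal : ∀ j ≤ 2 * k, b j = b (2 * k - j) := by
    intro j hj
    have := cyclotomic_coeff_palindrome (m := m) (i := j) (by omega) (by omega)
    rw [hk] at this
    show (((Polynomial.cyclotomic m ℤ).coeff j : ℤ) : ZMod 2) =
      (((Polynomial.cyclotomic m ℤ).coeff (2 * k - j) : ℤ) : ZMod 2)
    rw [this]
  -- the sum of all coefficients over ZMod 2 equals b k
  have hsum : Polynomial.eval 1 (Polynomial.cyclotomic m (ZMod 2)) = b k := by
    have hdeg : (Polynomial.cyclotomic m (ZMod 2)).natDegree = 2 * k := by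
      rw [natDegree_cyclotomic, hk]
    have hcoeff : ∀ j, (Polynomial.cyclotomic m (ZMod 2)).coeff j = b j := by
      intro j
      rw [← map_cyclotomic_int m (ZMod 2), coeff_map]
      simp [hb]
    rw [Polynomial.eval_eq_sum_range, hdeg]
    simp only [one_pow, mul_one, hcoeff]
    have hkmem : k ∈ Finset.range (2 * k + 1) := by
      simp; omega
    rw [← Finset.sum_erase_add _ _ hkmem]
    have herase : ∑ j ∈ (Finset.range (2 * k + 1)).erase k, b j = 0 := by
      apply Finset.sum_involution (g := fun j _ => 2 * k - j)
      · intro a ha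
        simp only [Finset.mem_erase, Finset.mem_range] at ha
        rw [hpal a (by omega)]
        exact CharTwo.add_self_eq_zero _
      · intro a ha _
        simp only [Finset.mem_erase, Finset.mem_range] at ha
        omega
      · intro a ha
        simp only [Finset.mem_erase, Finset.mem_range] at ha ⊢
        omega
      · intro a ha
        simp only [Finset.mem_erase, Finset.mem_range] at ha
        omega
    rw [herase, zero_add]
  -- the evaluation at 1 is odd
  have hodd : Odd (Polynomial.eval 1 (Polynomial.cyclotomic m ℤ)) := eval_one_cyclotomic_odd hm h3
  have heval : Polynomial.eval 1 (Polynomial.cyclotomic m (ZMod 2)) =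
      ((Polynomial.eval 1 (Polynomial.cyclotomic m ℤ) : ℤ) : ZMod 2) := by
    rw [← map_cyclotomic_int m (ZMod 2), eval_one_map]
    rfl
  have hbk : b k ≠ 0 := by
    rw [← hsum, heval]
    intro hcontra
    rw [ZMod.intCast_zmod_eq_zero_iff_dvd] at hcontra
    have h2 : (2 : ℤ) ∣ Polynomial.eval 1 (Polynomial.cyclotomic m ℤ) := by exact_mod_cast hcontra
    rw [Int.odd_iff] at hodd
    omega
  rw [Int.odd_iff]
  by_contra hne
  apply hbk
  have h2 : (2 : ℤ) ∣ (Polynomial.cyclotomic m ℤ).coeff k := by omega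
  show (((Polynomial.cyclotomic m ℤ).coeff k : ℤ) : ZMod 2) = 0
  rw [ZMod.intCast_zmod_eq_zero_iff_dvd]
  exact_mod_cast h2
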